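/- Let n ≥ 1, let a : Fin n → ℕ satisfy a i ≥ 2 for every i, and let f(z) = ∑ i, (z i)^(a i) be the Pham–Brieskorn polynomial on EuclideanSpace ℂ (Fin n). Let S = {z : ‖z‖ = 1} be the unit sphere, L_f = {z ∈ S : f(z) = 0} the link, and define φ : S ∖ L_f → Metric.sphere (0:ℂ) 1 by φ(z) = f(z)/‖f(z)‖. Then φ is the projection of a topological fiber bundle: there exist a topological space F and, for every point b of the unit circle, a trivialization of φ with fiber F whose base set contains b (in Mathlib terms, ∃ e : Trivialization F φ with b ∈ e.baseSet). -/

import Mathlib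

/-- The Pham–Brieskorn polynomial `z ↦ ∑ i, (z i) ^ (a i)`. -/
noncomputable def pbPoly (n : ℕ) (a : Fin n → ℕ) (z : EuclideanSpace ℂ (Fin n)) : ℂ :=
  ∑ i, z i ^ a i

/-- The unit sphere `S` in `EuclideanSpace ℂ (Fin n)`. -/
def pbSphere (n : ℕ) : Set (EuclideanSpace ℂ (Fin n)) := {z | ‖z‖ = 1}

/-- The link `L_f = {z ∈ S : f z = 0}` of the Pham–Brieskorn polynomial. -/
def pbLink (n : ℕ) (a : Fin n → ℕ) : Set (EuclideanSpace ℂ (Fin n)) :=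
  {z | ‖z‖ = 1 ∧ pbPoly n a z = 0}

/-- The Milnor map `φ : S ∖ L_f → S¹`, `φ z = f z / ‖f z‖`. -/
noncomputable def pbMilnorMap (n : ℕ) (a : Fin n → ℕ)
    (z : (pbSphere n \ pbLink n a : Set (EuclideanSpace ℂ (Fin n)))) :
    Metric.sphere (0 : ℂ) 1 :=
  ⟨pbPoly n a z.1 / (‖pbPoly n a z.1‖ : ℂ), by
    have hz : pbPoly n a z.1 ≠ 0 := fun h => z.2.2 ⟨z.2.1, h⟩
    have hn0 : ‖pbPoly n a z.1‖ ≠ 0 := norm_ne_zero_iff.mpr hz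
    simp [mem_sphere_zero_iff_norm, norm_div, hz]⟩

/-! ### Auxiliary definitions -/

noncomputable def pbAct (n : ℕ) (a : Fin n → ℕ) (θ : ℝ) (z : EuclideanSpace ℂ (Fin n)) :
    EuclideanSpace ℂ (Fin n) := WithLp.toLp 2 (fun i => Complex.exp ((θ / a i : ℝ) * Complex.I) * z i)

lemma pbAct_norm (n : ℕ) (a : Fin n → ℕ) (θ : ℝ) (z : EuclideanSpace ℂ (Fin n)) :
    ‖pbAct n a θ z‖ = ‖z‖ := by
  simp [EuclideanSpace.norm_eq, pbAct, Complex.norm_exp]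

lemma pbAct_continuous (n : ℕ) (a : Fin n → ℕ) :
    Continuous (fun p : ℝ × EuclideanSpace ℂ (Fin n) => pbAct n a p.1 p.2) := by
  refine (PiLp.continuous_toLp _ _).comp (continuous_pi fun i => ?_)
  exact ((Complex.continuous_exp.comp ((Complex.continuous_ofReal.comp
    (continuous_fst.div_const _)).mul continuous_const)).mul
    ((PiLp.continuous_apply _ _ i).comp continuous_snd))

lemma pbPoly_act (n : ℕ) (a : Fin n → ℕ) (ha : ∀ i, 2 ≤ a i) (θ : ℝ)
    (z : EuclideanSpace ℂ (Fin n)) :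
    pbPoly n a (pbAct n a θ z) = Complex.exp (θ * Complex.I) * pbPoly n a z := by
  unfold pbPoly pbAct
  simp only [PiLp.toLp_apply]
  rw [Finset.mul_sum]
  congr 1; ext i
  have hai : (a i : ℝ) ≠ 0 := Nat.cast_ne_zero.mpr (by have := ha i; omega)
  rw [mul_pow, ← Complex.exp_nat_mul]
  congr 2
  push_cast
  rw [← mul_assoc, mul_div_cancel₀]
  exact_mod_cast hai

lemma pbAct_add (n : ℕ) (a : Fin n → ℕ) (θ θ' : ℝ) (z : EuclideanSpace ℂ (Fin n)) :
    pbAct n a θ (pbAct n a θ' z) = pbAct n a (θ + θ') z := by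
  ext i
  simp only [pbAct, PiLp.toLp_apply, ← mul_assoc, ← Complex.exp_add]
  congr 2
  push_cast
  ring

lemma pbAct_zero (n : ℕ) (a : Fin n → ℕ) (z : EuclideanSpace ℂ (Fin n)) :
    pbAct n a 0 z = z := by
  ext i; simp [pbAct]

lemma pb_mem_iff (n : ℕ) (a : Fin n → ℕ) (z : EuclideanSpace ℂ (Fin n)) :
    z ∈ (pbSphere n \ pbLink n a : Set _) ↔ ‖z‖ = 1 ∧ pbPoly n a z ≠ 0 := by
  constructor
  · rintro ⟨h1, h2⟩
    exact ⟨h1, fun h => h2 ⟨h1, h⟩⟩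
  · rintro ⟨h1, h2⟩
    exact ⟨h1, fun h => h2 h.2⟩

noncomputable def pbActS (n : ℕ) (a : Fin n → ℕ) (ha : ∀ i, 2 ≤ a i) (θ : ℝ)
    (z : (pbSphere n \ pbLink n a : Set (EuclideanSpace ℂ (Fin n)))) :
    (pbSphere n \ pbLink n a : Set (EuclideanSpace ℂ (Fin n))) :=
  ⟨pbAct n a θ z.1, by
    have hz := (pb_mem_iff n a z.1).mp z.2
    refine (pb_mem_iff n a _).mpr ⟨?_, ?_⟩
    · rw [pbAct_norm]; exact hz.1
    · rw [pbPoly_act n a ha]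
      exact mul_ne_zero (Complex.exp_ne_zero _) hz.2⟩

lemma pbMilnorMap_act (n : ℕ) (a : Fin n → ℕ) (ha : ∀ i, 2 ≤ a i) (θ : ℝ)
    (z : (pbSphere n \ pbLink n a : Set (EuclideanSpace ℂ (Fin n)))) :
    (pbMilnorMap n a (pbActS n a ha θ z) : ℂ) =
      Complex.exp (θ * Complex.I) * (pbMilnorMap n a z : ℂ) := by
  simp only [pbMilnorMap, pbActS, pbPoly_act n a ha]
  rw [norm_mul]
  have h1 : ‖Complex.exp (↑θ * Complex.I)‖ = 1 := by
    simp [Complex.norm_exp]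
  rw [h1, one_mul, mul_div_assoc]

noncomputable def pbArg (b u : ℂ) : ℝ := Complex.arg b + Complex.arg (u / b)

lemma exp_pbArg (b u : ℂ) (hb : ‖b‖ = 1) (hu : ‖u‖ = 1) :
    Complex.exp ((pbArg b u : ℝ) * Complex.I) = u := by
  have hb0 : b ≠ 0 := by intro h; simp [h] at hb
  have h1 : Complex.exp ((Complex.arg b : ℝ) * Complex.I) = b := by
    have := Complex.norm_mul_exp_arg_mul_I b
    rwa [hb, Complex.ofReal_one, one_mul] at this
  have h2 : Complex.exp ((Complex.arg (u / b) : ℝ) * Complex.I) = u / b := by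
    have := Complex.norm_mul_exp_arg_mul_I (u / b)
    rwa [norm_div, hb, hu, div_one, Complex.ofReal_one, one_mul] at this
  rw [pbArg, Complex.ofReal_add, add_mul, Complex.exp_add, h1, h2,
    mul_div_cancel₀ _ hb0]

lemma mem_slitPlane_of_abs_one (w : ℂ) (h1 : ‖w‖ = 1) (h2 : w ≠ -1) :
    w ∈ Complex.slitPlane := by
  rw [Complex.mem_slitPlane_iff]
  by_contra h
  push_neg at h
  obtain ⟨hre, him⟩ := h
  have hw : w = (w.re : ℂ) := Complex.ext rfl (by simp [him])
  rw [hw, Complex.norm_real, Real.norm_eq_abs, abs_of_nonpos hre] at h1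
  apply h2
  rw [hw]
  have : w.re = -1 := by linarith
  simp [this]

lemma pbArg_continuousOn (b : ℂ) (hb : ‖b‖ = 1) :
    ContinuousOn (pbArg b) {u : ℂ | ‖u‖ = 1 ∧ u ≠ -b} := by
  have hb0 : b ≠ 0 := by intro h; simp [h] at hb
  intro u hu
  apply ContinuousAt.continuousWithinAt
  apply ContinuousAt.add continuousAt_const
  have hdiv : ContinuousAt (fun x : ℂ => x / b) u := continuousAt_id.div continuousAt_const hb0
  refine ContinuousAt.comp (Complex.continuousAt_arg ?_) hdiv
  apply mem_slitPlane_of_abs_one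
  · rw [norm_div, hb, hu.1, div_one]
  · intro h
    apply hu.2
    field_simp at h
    simpa using h

lemma pbPoly_continuous (n : ℕ) (a : Fin n → ℕ) : Continuous (pbPoly n a) := by
  unfold pbPoly
  exact continuous_finset_sum _ fun i _ => (PiLp.continuous_apply _ _ i).pow _

lemma pbMilnorMap_continuous (n : ℕ) (a : Fin n → ℕ) :
    Continuous (pbMilnorMap n a) := by
  apply Continuous.subtype_mk
  have h1 : Continuous fun z : (pbSphere n \ pbLink n a : Set (EuclideanSpace ℂ (Fin n))) =>
      pbPoly n a z.1 := (pbPoly_continuous n a).comp continuous_subtype_val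
  exact h1.div ((Complex.continuous_ofReal.comp (h1.norm))) fun z => by
    have hz : pbPoly n a z.1 ≠ 0 := fun h => z.2.2 ⟨z.2.1, h⟩
    simpa using norm_ne_zero_iff.mpr hz

lemma pb_abs_milnor (n : ℕ) (a : Fin n → ℕ)
    (z : (pbSphere n \ pbLink n a : Set (EuclideanSpace ℂ (Fin n)))) :
    ‖(pbMilnorMap n a z : ℂ)‖ = 1 := by
  have := mem_sphere_zero_iff_norm.mp (pbMilnorMap n a z).2
  simpa using this

/-- The fiber: preimage of `1` under the Milnor map. -/
def pbFiber (n : ℕ) (a : Fin n → ℕ) : Type :=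
  {w : (pbSphere n \ pbLink n a : Set (EuclideanSpace ℂ (Fin n))) //
    (pbMilnorMap n a w : ℂ) = 1}

noncomputable instance (n : ℕ) (a : Fin n → ℕ) : TopologicalSpace (pbFiber n a) :=
  instTopologicalSpaceSubtype


noncomputable def pbToFiber (n : ℕ) (a : Fin n → ℕ) (ha : ∀ i, 2 ≤ a i)
    (b : Metric.sphere (0 : ℂ) 1)
    (z : (pbSphere n \ pbLink n a : Set (EuclideanSpace ℂ (Fin n)))) : pbFiber n a :=
  ⟨pbActS n a ha (-(pbArg b (pbMilnorMap n a z))) z, by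
    have hb1 : ‖(b : ℂ)‖ = 1 := by
      simpa using mem_sphere_zero_iff_norm.mp b.2
    rw [pbMilnorMap_act n a ha]
    have key := exp_pbArg (b : ℂ) (pbMilnorMap n a z) hb1 (pb_abs_milnor n a z)
    nth_rewrite 2 [← key]
    rw [← Complex.exp_add]
    convert Complex.exp_zero using 2
    push_cast
    ring⟩

lemma pbToFiber_contOn (n : ℕ) (a : Fin n → ℕ) (ha : ∀ i, 2 ≤ a i)
    (b : Metric.sphere (0 : ℂ) 1) :
    ContinuousOn (pbToFiber n a ha b)
      (pbMilnorMap n a ⁻¹' (Subtype.val ⁻¹' {(-(b : ℂ))}ᶜ)) := by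
  have hb1 : ‖(b : ℂ)‖ = 1 := by
    simpa using mem_sphere_zero_iff_norm.mp b.2
  have harg : ContinuousOn
      (fun z : (pbSphere n \ pbLink n a : Set (EuclideanSpace ℂ (Fin n))) =>
        pbArg (b : ℂ) (pbMilnorMap n a z))
      (pbMilnorMap n a ⁻¹' (Subtype.val ⁻¹' {(-(b : ℂ))}ᶜ)) := by
    refine (pbArg_continuousOn (b : ℂ) hb1).comp
      ((continuous_subtype_val.comp (pbMilnorMap_continuous n a)).continuousOn) ?_
    intro z hz
    exact ⟨pb_abs_milnor n a z, hz⟩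
  have hbase : ContinuousOn
      (fun z : (pbSphere n \ pbLink n a : Set (EuclideanSpace ℂ (Fin n))) =>
        pbAct n a (-(pbArg (b : ℂ) (pbMilnorMap n a z))) z.1)
      (pbMilnorMap n a ⁻¹' (Subtype.val ⁻¹' {(-(b : ℂ))}ᶜ)) := by
    apply ContinuousOn.comp (t := (Set.univ : Set (ℝ × EuclideanSpace ℂ (Fin n))))
      (g := fun p : ℝ × EuclideanSpace ℂ (Fin n) => pbAct n a p.1 p.2)
      (f := fun z : (pbSphere n \ pbLink n a : Set (EuclideanSpace ℂ (Fin n))) =>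
        (-(pbArg (b : ℂ) (pbMilnorMap n a z)), z.1))
    · exact (pbAct_continuous n a).continuousOn
    · exact harg.neg.prodMk continuous_subtype_val.continuousOn
    · exact Set.mapsTo_univ _ _
  refine (Topology.IsInducing.continuousOn_iff (g := (Subtype.val : pbFiber n a → _)) ⟨rfl⟩).mpr ?_
  rw [Topology.IsInducing.subtypeVal.continuousOn_iff]
  exact hbase

/-- The inverse of the trivialization map. -/
noncomputable def pbFromFiber (n : ℕ) (a : Fin n → ℕ) (ha : ∀ i, 2 ≤ a i)
    (b : Metric.sphere (0 : ℂ) 1)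
    (p : Metric.sphere (0 : ℂ) 1 × pbFiber n a) :
    (pbSphere n \ pbLink n a : Set (EuclideanSpace ℂ (Fin n))) :=
  pbActS n a ha (pbArg b p.1) p.2.1

lemma pbFromFiber_contOn (n : ℕ) (a : Fin n → ℕ) (ha : ∀ i, 2 ≤ a i)
    (b : Metric.sphere (0 : ℂ) 1) :
    ContinuousOn (pbFromFiber n a ha b)
      ((Subtype.val ⁻¹' {(-(b : ℂ))}ᶜ) ×ˢ (Set.univ : Set (pbFiber n a))) := by
  have hb1 : ‖(b : ℂ)‖ = 1 := by
    simpa using mem_sphere_zero_iff_norm.mp b.2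
  have harg : ContinuousOn
      (fun p : Metric.sphere (0 : ℂ) 1 × pbFiber n a => pbArg (b : ℂ) p.1)
      ((Subtype.val ⁻¹' {(-(b : ℂ))}ᶜ) ×ˢ (Set.univ : Set (pbFiber n a))) := by
    refine (pbArg_continuousOn (b : ℂ) hb1).comp
      ((continuous_subtype_val.comp continuous_fst).continuousOn) ?_
    rintro ⟨u, y⟩ ⟨hu, -⟩
    exact ⟨by simpa using mem_sphere_zero_iff_norm.mp u.2, hu⟩
  have hbase : ContinuousOn
      (fun p : Metric.sphere (0 : ℂ) 1 × pbFiber n a =>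
        pbAct n a (pbArg (b : ℂ) p.1) p.2.1.1)
      ((Subtype.val ⁻¹' {(-(b : ℂ))}ᶜ) ×ˢ (Set.univ : Set (pbFiber n a))) := by
    apply ContinuousOn.comp (t := (Set.univ : Set (ℝ × EuclideanSpace ℂ (Fin n))))
      (g := fun p : ℝ × EuclideanSpace ℂ (Fin n) => pbAct n a p.1 p.2)
      (f := fun p : Metric.sphere (0 : ℂ) 1 × pbFiber n a =>
        (pbArg (b : ℂ) p.1, p.2.1.1))
    · exact (pbAct_continuous n a).continuousOn
    · exact harg.prodMk (continuous_subtype_val.comp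
        (continuous_subtype_val.comp continuous_snd)).continuousOn
    · exact Set.mapsTo_univ _ _
  rw [Topology.IsInducing.subtypeVal.continuousOn_iff]
  exact hbase

/-- The explicit local trivialization of the Milnor map near `b ∈ S¹`. -/
noncomputable def pbTriv (n : ℕ) (a : Fin n → ℕ) (ha : ∀ i, 2 ≤ a i)
    (b : Metric.sphere (0 : ℂ) 1) :
    Bundle.Trivialization (pbFiber n a) (pbMilnorMap n a) := by
  have hb1 : ‖(b : ℂ)‖ = 1 := by
    simpa using mem_sphere_zero_iff_norm.mp b.2
  refine
  { toFun := fun z => (pbMilnorMap n a z, pbToFiber n a ha b z)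
    invFun := pbFromFiber n a ha b
    source := pbMilnorMap n a ⁻¹' (Subtype.val ⁻¹' {(-(b : ℂ))}ᶜ)
    target := (Subtype.val ⁻¹' {(-(b : ℂ))}ᶜ) ×ˢ Set.univ
    baseSet := Subtype.val ⁻¹' {(-(b : ℂ))}ᶜ
    open_baseSet := isOpen_compl_singleton.preimage continuous_subtype_val
    source_eq := rfl
    target_eq := rfl
    proj_toFun := fun z _ => rfl
    open_source := ?_
    open_target := ?_
    map_source' := ?_
    map_target' := ?_
    left_inv' := ?_
    right_inv' := ?_
    continuousOn_toFun := ?_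
    continuousOn_invFun := ?_ }
  · -- map_source'
    intro z hz
    exact ⟨hz, Set.mem_univ _⟩
  · -- map_target'
    rintro ⟨u, y⟩ ⟨hu, -⟩
    have hthis : (pbMilnorMap n a (pbActS n a ha (pbArg b u) y.1) : ℂ) = (u : ℂ) := by
      rw [pbMilnorMap_act n a ha, y.2, mul_one]
      exact exp_pbArg (b : ℂ) u hb1 (by
        simpa using mem_sphere_zero_iff_norm.mp u.2)
    show (pbMilnorMap n a (pbActS n a ha (pbArg b u) y.1) : ℂ) ∈ ({(-(b : ℂ))}ᶜ : Set ℂ)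
    rw [hthis]
    exact hu
  · -- left_inv'
    intro z _
    apply Subtype.ext
    show pbAct n a _ (pbAct n a _ z.1) = z.1
    rw [pbAct_add, add_neg_cancel, pbAct_zero]
  · -- right_inv'
    rintro ⟨u, y⟩ _
    have hu1 : ‖(u : ℂ)‖ = 1 := by
      simpa using mem_sphere_zero_iff_norm.mp u.2
    have hφ : pbMilnorMap n a (pbActS n a ha (pbArg b u) y.1) = u := by
      apply Subtype.ext
      rw [pbMilnorMap_act n a ha, y.2, mul_one]
      exact exp_pbArg (b : ℂ) u hb1 hu1
    refine Prod.ext hφ ?_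
    apply Subtype.ext
    apply Subtype.ext
    show (pbAct n a (-(pbArg b (pbMilnorMap n a (pbActS n a ha (pbArg b u) y.1))))
      (pbAct n a (pbArg b u) y.1.1)) = y.1.1
    rw [hφ, pbAct_add, neg_add_cancel, pbAct_zero]
  rotate_left 2
  · -- open_source
    exact (isOpen_compl_singleton.preimage continuous_subtype_val).preimage
      (pbMilnorMap_continuous n a)
  · -- open_target
    exact ((isOpen_compl_singleton.preimage continuous_subtype_val)).prod isOpen_univ
  · -- continuity of toFun
    exact (pbMilnorMap_continuous n a).continuousOn.prodMk (pbToFiber_contOn n a ha b)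
  · -- continuity of invFun
    exact pbFromFiber_contOn n a ha b


/-- **Milnor's fibration theorem on the sphere, for
Pham–Brieskorn polynomials.** The map `φ = f/|f| : S ∖ L_f → S¹` is the
projection of a topological fiber bundle: there is a topological space `F`
such that every point of the circle lies in the base set of some
trivialization of `φ` with fiber `F`. -/
theorem phamBrieskorn_milnor_fibration_sphere
    (n : ℕ) (hn : 1 ≤ n) (a : Fin n → ℕ) (ha : ∀ i, 2 ≤ a i) :
    ∃ (F : Type) (tF : TopologicalSpace F),
      ∀ b : Metric.sphere (0 : ℂ) 1,
        ∃ e : @Bundle.Trivialization (Metric.sphere (0 : ℂ) 1) F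
            (pbSphere n \ pbLink n a : Set (EuclideanSpace ℂ (Fin n)))
            _ tF _ (pbMilnorMap n a),
          b ∈ e.baseSet := by
  refine ⟨pbFiber n a, inferInstance, fun b => ⟨pbTriv n a ha b, ?_⟩⟩
  show (b : ℂ) ∈ ({(-(b : ℂ))}ᶜ : Set ℂ)
  simp only [Set.mem_compl_iff, Set.mem_singleton_iff]
  intro h
  have hb1 : ‖(b : ℂ)‖ = 1 := by
    simpa using mem_sphere_zero_iff_norm.mp b.2
  have h2 : (2 : ℂ) * (b : ℂ) = 0 := by linear_combination h
  rcases mul_eq_zero.mp h2 with h' | h'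
  · norm_num at h'
  · simp [h'] at hb1
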